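/- For every finite simple graph G, either c₂(G) = mr(G, F₂), or c₂(G) = mr(G, F₂) + 1 and mr(G, F₂) is even. -/

import Mathlib

open Matrix

/-- A subgraph complementation system for `G`: a finite collection (multiset) of subsets of
vertices such that two distinct vertices are adjacent iff they lie together in an odd
number of the sets. -/
def IsSCS {V : Type*} [DecidableEq V] (G : SimpleGraph V) (𝒞 : Multiset (Finset V)) : Prop :=
  ∀ u v : V, u ≠ v →
    (G.Adj u v ↔ Odd (Multiset.card (𝒞.filter (fun C => u ∈ C ∧ v ∈ C))))

/-- The subgraph complementation number `c₂(G)`: the minimum cardinality of a subgraph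
complementation system for `G`. -/
noncomputable def c2 {V : Type*} [DecidableEq V] (G : SimpleGraph V) : ℕ :=
  sInf {k | ∃ 𝒞 : Multiset (Finset V), IsSCS G 𝒞 ∧ Multiset.card 𝒞 = k}

/-- A symmetric matrix over `F₂` fits `G` if its off-diagonal entries record adjacency. -/
def FitsF2 {V : Type*} (G : SimpleGraph V) (A : Matrix V V (ZMod 2)) : Prop :=
  A.IsSymm ∧ ∀ u v : V, u ≠ v → (A u v = 1 ↔ G.Adj u v)

/-- The minimum rank of `G` over `F₂`: the minimum rank of a symmetric matrix over `F₂`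
that fits `G`. -/
noncomputable def mrF2 {V : Type*} [Fintype V] (G : SimpleGraph V) : ℕ :=
  sInf {k | ∃ A : Matrix V V (ZMod 2), FitsF2 G A ∧ A.rank = k}

set_option linter.unusedSectionVars false
set_option maxHeartbeats 1000000

open Module

namespace SCS

variable {V : Type*} [Fintype V] [DecidableEq V]

lemma z2_add_self (a : ZMod 2) : a + a = 0 := by revert a; decide

lemma z2_ne_one {a : ZMod 2} (h : a ≠ 1) : a = 0 := by revert a h; decide

lemma z2_ne_zero {a : ZMod 2} (h : a ≠ 0) : a = 1 := by revert a h; decide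

lemma z2_sq (a : ZMod 2) : a * a = a := by revert a; decide

lemma mat_add_self (M : Matrix V V (ZMod 2)) : M + M = 0 := by
  ext i j; simp [z2_add_self]

lemma odd_iff_cast (n : ℕ) : Odd n ↔ (n : ZMod 2) = 1 := by
  rw [Nat.odd_iff, ← ZMod.natCast_mod n 2]
  rcases Nat.mod_two_eq_zero_or_one n with h | h <;> rw [h] <;> simp

lemma vecMulVec_mulVec (x y w : V → ZMod 2) :
    (vecMulVec x y) *ᵥ w = (y ⬝ᵥ w) • x := by
  funext i
  simp only [mulVec, dotProduct, vecMulVec_apply, Pi.smul_apply, smul_eq_mul, Finset.sum_mul]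
  exact Finset.sum_congr rfl fun j _ => by ring

lemma vecMulVec_isSymm (x : V → ZMod 2) : (vecMulVec x x).IsSymm := by
  ext i j; simp [vecMulVec_apply, mul_comm, Matrix.IsSymm]

lemma dot_symm (A : Matrix V V (ZMod 2)) (hA : A.IsSymm) (y v : V → ZMod 2) :
    (A *ᵥ y) ⬝ᵥ v = y ⬝ᵥ (A *ᵥ v) := by
  rw [dotProduct_comm, dotProduct_mulVec, dotProduct_comm, ← mulVec_transpose, hA.eq]


lemma rank_def (A : Matrix V V (ZMod 2)) :
    A.rank = finrank (ZMod 2) (LinearMap.range A.mulVecLin) := rfl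

lemma rank_add_ker (A : Matrix V V (ZMod 2)) :
    A.rank + finrank (ZMod 2) (LinearMap.ker A.mulVecLin) = Fintype.card V := by
  rw [rank_def, LinearMap.finrank_range_add_finrank_ker A.mulVecLin,
    finrank_pi (ZMod 2)]

lemma rank_lt_of_ker_lt {A B : Matrix V V (ZMod 2)}
    (h : LinearMap.ker A.mulVecLin < LinearMap.ker B.mulVecLin) : B.rank < A.rank := by
  have h1 := rank_add_ker A
  have h2 := rank_add_ker B
  have := Submodule.finrank_lt_finrank_of_lt h
  omega

lemma rank_add_le (A B : Matrix V V (ZMod 2)) : (A + B).rank ≤ A.rank + B.rank := by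
  rw [rank_def, rank_def, rank_def]
  refine le_trans (Submodule.finrank_mono ?_)
    (Submodule.finrank_add_le_finrank_add_finrank _ _)
  rintro x ⟨v, rfl⟩
  rw [mulVecLin_apply, add_mulVec]
  exact Submodule.add_mem_sup ⟨v, rfl⟩ ⟨v, rfl⟩

lemma rank_vecMulVec_le (x y : V → ZMod 2) : (vecMulVec x y).rank ≤ 1 := by
  by_cases hx : x = 0
  · subst hx
    have : vecMulVec (0 : V → ZMod 2) y = 0 := by ext i j; simp [vecMulVec_apply]
    simp [this, Matrix.rank_zero]
  · rw [rank_def]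
    have hr : LinearMap.range (vecMulVec x y).mulVecLin ≤ Submodule.span (ZMod 2) {x} := by
      rintro _ ⟨v, rfl⟩
      rw [mulVecLin_apply, vecMulVec_mulVec]
      exact Submodule.smul_mem _ _ (Submodule.mem_span_singleton_self x)
    exact (Submodule.finrank_mono hr).trans (le_of_eq (finrank_span_singleton hx))

lemma eq_zero_of_rank_eq_zero {A : Matrix V V (ZMod 2)} (h : A.rank = 0) : A = 0 := by
  have hr : LinearMap.range A.mulVecLin = ⊥ := Submodule.finrank_eq_zero.mp h
  ext i j
  have : A.mulVecLin (Pi.single j 1) = 0 := by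
    have : A.mulVecLin (Pi.single j 1) ∈ (⊥ : Submodule (ZMod 2) (V → ZMod 2)) :=
      hr ▸ LinearMap.mem_range_self _ _
    simpa using this
  have := congrFun this i
  simpa [mulVecLin_apply, mulVec_single] using this

lemma rank_pos_of_ne_zero {A : Matrix V V (ZMod 2)} (h : A ≠ 0) : 1 ≤ A.rank := by
  rcases Nat.eq_zero_or_pos A.rank with h0 | h1
  · exact absurd (eq_zero_of_rank_eq_zero h0) h
  · exact h1

lemma rank_add_vecMulVec_le (A : Matrix V V (ZMod 2)) (t : V → ZMod 2) :
    (A + vecMulVec (A *ᵥ t) (A *ᵥ t)).rank ≤ A.rank := by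
  rw [rank_def, rank_def]
  apply Submodule.finrank_mono
  rintro _ ⟨v, rfl⟩
  refine ⟨v + ((A *ᵥ t) ⬝ᵥ v) • t, ?_⟩
  rw [mulVecLin_apply, mulVecLin_apply, mulVec_add, add_mulVec, vecMulVec_mulVec,
    mulVec_smul]


lemma z2_sq' (a : ZMod 2) : a * a = a := by revert a; decide

/-- quadratic form of a symmetric matrix over F₂ equals dot with the diagonal. -/
lemma dot_mulVec_self (A : Matrix V V (ZMod 2)) (hA : A.IsSymm) (y : V → ZMod 2) :
    y ⬝ᵥ (A *ᵥ y) = y ⬝ᵥ (fun i => A i i) := by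
  have expand : y ⬝ᵥ (A *ᵥ y) = ∑ p ∈ Finset.univ ×ˢ Finset.univ,
      y (p : V × V).1 * A p.1 p.2 * y p.2 := by
    rw [Finset.sum_product]
    simp only [dotProduct, mulVec, dotProduct, Finset.mul_sum]
    exact Finset.sum_congr rfl fun i _ => Finset.sum_congr rfl fun j _ => by ring
  rw [expand, ← Finset.diag_union_offDiag, Finset.sum_union (Finset.disjoint_diag_offDiag _)]
  have h2 : ∑ p ∈ Finset.univ.offDiag, y (p : V × V).1 * A p.1 p.2 * y p.2 = 0 := by
    apply Finset.sum_involution (g := fun p _ => Prod.swap p)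
    · intro p _
      rw [Prod.fst_swap, Prod.snd_swap, hA.apply p.2 p.1]
      have : y p.2 * A p.2 p.1 * y p.1 = y p.1 * A p.2 p.1 * y p.2 := by ring
      rw [this, z2_add_self]
    · intro p hp _
      have := (Finset.mem_offDiag.mp hp).2.2
      intro hcon
      exact this (congrArg Prod.snd hcon ▸ rfl)
    · intro p hp
      rcases Finset.mem_offDiag.mp hp with ⟨h1, h2, h3⟩
      exact Finset.mem_offDiag.mpr ⟨Finset.mem_univ _, Finset.mem_univ _, fun h => h3 h.symm⟩
    · intro p _; exact Prod.swap_swap p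
  rw [h2, add_zero]
  have hdiag : ∑ p ∈ Finset.univ.diag, y (p : V × V).1 * A p.1 p.2 * y p.2
      = ∑ i, y i * A i i * y i := by
    have himg : (Finset.univ : Finset V).diag = Finset.image (fun i => (i, i)) Finset.univ := by
      ext p
      simp only [Finset.mem_diag, Finset.mem_image, Finset.mem_univ, true_and]
      constructor
      · rintro h; exact ⟨p.1, Prod.ext rfl h⟩
      · rintro ⟨i, rfl⟩; rfl
    rw [himg, Finset.sum_image (by intro a _ b _ h; exact (Prod.mk.injEq _ _ _ _).mp h |>.1)]
  rw [hdiag]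
  simp only [dotProduct]
  exact Finset.sum_congr rfl fun i _ => by rw [mul_comm (y i * A i i) (y i), ← mul_assoc, z2_sq']



/-- subtracting (adding, char 2) the rank-one piece built from a vector `A *ᵥ y` with
`y ⬝ᵥ A *ᵥ y = 1` strictly drops the rank. -/
lemma rank_drop (A : Matrix V V (ZMod 2)) (hA : A.IsSymm) (y : V → ZMod 2)
    (hy : y ⬝ᵥ (A *ᵥ y) = 1)
    (hd : ∀ (v w : V → ZMod 2), (A *ᵥ v) ⬝ᵥ w = v ⬝ᵥ (A *ᵥ w)) :
    (A + vecMulVec (A *ᵥ y) (A *ᵥ y)).rank < A.rank := by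
  set z := A *ᵥ y with hz
  set B := A + vecMulVec z z with hB
  apply rank_lt_of_ker_lt
  rw [SetLike.lt_iff_le_and_exists]
  constructor
  · intro v hv
    rw [LinearMap.mem_ker, mulVecLin_apply] at hv ⊢
    rw [hB, add_mulVec, vecMulVec_mulVec, hv]
    have : z ⬝ᵥ v = 0 := by rw [hz, hd y v, hv, dotProduct_zero]
    rw [this, zero_smul, add_zero]
  · refine ⟨y, ?_, ?_⟩
    · rw [LinearMap.mem_ker, mulVecLin_apply, hB, add_mulVec, vecMulVec_mulVec]
      have : z ⬝ᵥ y = 1 := by rw [hz, hd y y]; exact hy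
      rw [this, one_smul]
      funext i
      exact z2_add_self _
    · rw [LinearMap.mem_ker, mulVecLin_apply, ← hz]
      intro hcon
      rw [hcon, dotProduct_zero] at hy
      exact one_ne_zero hy.symm


lemma exists_dot_zero_mulVec_ne (A : Matrix V V (ZMod 2)) (d : V → ZMod 2)
    (h2 : 2 ≤ A.rank) : ∃ t, t ⬝ᵥ d = 0 ∧ A *ᵥ t ≠ 0 := by
  by_contra hcon
  push_neg at hcon
  set M : Matrix Unit V (ZMod 2) := Matrix.replicateRow Unit d with hM
  have hker : LinearMap.ker M.mulVecLin ≤ LinearMap.ker A.mulVecLin := by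
    intro t ht
    rw [LinearMap.mem_ker, mulVecLin_apply] at ht ⊢
    apply hcon
    have h0 := congrFun ht ()
    have : d ⬝ᵥ t = 0 := by
      simpa [hM, Matrix.mulVec, Matrix.replicateRow_apply, dotProduct] using h0
    rw [dotProduct_comm]; exact this
  have hMrank : M.rank ≤ 1 := by
    have := Matrix.rank_le_card_height M
    simpa using this
  have hMker : M.rank + finrank (ZMod 2) (LinearMap.ker M.mulVecLin) = Fintype.card V := by
    have := LinearMap.finrank_range_add_finrank_ker M.mulVecLin
    rw [finrank_pi (ZMod 2)] at this
    exact this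
  have hAk := rank_add_ker A
  have hmono := Submodule.finrank_mono hker
  omega

lemma single_dot_diag (A : Matrix V V (ZMod 2)) (u : V) :
    (Pi.single u (1 : ZMod 2)) ⬝ᵥ (fun i => A i i) = A u u := by
  simp [dotProduct, Pi.single_apply]

lemma decomp (r : ℕ) : ∀ (A : Matrix V V (ZMod 2)), A.IsSymm → A.rank ≤ r →
    (A = 0 ∨ ∃ u, A u u = 1) →
    ∃ L : List (V → ZMod 2), (L.map fun x => vecMulVec x x).sum = A ∧ L.length ≤ A.rank := by
  induction r with
  | zero =>
    intro A hs hr _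
    have hA0 : A = 0 := eq_zero_of_rank_eq_zero (Nat.le_zero.mp hr)
    exact ⟨[], by simp [hA0], by simp⟩
  | succ r ih =>
    intro A hs hr hd
    rcases hd with rfl | ⟨u, hu⟩
    · exact ⟨[], by simp, by simp⟩
    have hdsym : ∀ v w, (A *ᵥ v) ⬝ᵥ w = v ⬝ᵥ (A *ᵥ w) := fun v w => dot_symm A hs v w
    obtain ⟨y, hy1, hy2⟩ : ∃ y : V → ZMod 2, y ⬝ᵥ (A *ᵥ y) = 1 ∧
        (A + vecMulVec (A *ᵥ y) (A *ᵥ y) = 0 ∨ ∃ w, (A *ᵥ y) w ≠ A w w) := by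
      have hqu : (Pi.single u 1) ⬝ᵥ (A *ᵥ (Pi.single u (1 : ZMod 2))) = 1 := by
        rw [dot_mulVec_self A hs, single_dot_diag, hu]
      by_cases h1 : A + vecMulVec (A *ᵥ Pi.single u 1) (A *ᵥ Pi.single u 1) = 0 ∨
          ∃ w, (A *ᵥ Pi.single u 1) w ≠ A w w
      · exact ⟨Pi.single u 1, hqu, h1⟩
      · push_neg at h1
        obtain ⟨hne, hcol⟩ := h1
        have hlt := rank_drop A hs (Pi.single u 1) hqu hdsym
        have hge1 := rank_pos_of_ne_zero hne
        have h2 : 2 ≤ A.rank := by omega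
        obtain ⟨t, ht0, htA⟩ := exists_dot_zero_mulVec_ne A (fun i => A i i) h2
        refine ⟨Pi.single u 1 + t, ?_, ?_⟩
        · rw [dot_mulVec_self A hs, add_dotProduct, single_dot_diag, hu, ht0, add_zero]
        · right
          obtain ⟨w, hw⟩ : ∃ w, (A *ᵥ t) w ≠ 0 := by
            by_contra hc; push_neg at hc; exact htA (funext hc)
          refine ⟨w, ?_⟩
          rw [mulVec_add]
          intro hcon
          apply hw
          have h' : (A *ᵥ Pi.single u 1) w + (A *ᵥ t) w = (A *ᵥ Pi.single u 1) w := by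
            rw [Pi.add_apply] at hcon
            rw [hcon, hcol w]
          exact add_eq_left.mp h'
    set z := A *ᵥ y with hz
    set B := A + vecMulVec z z with hB
    have hBsym : B.IsSymm := hs.add (vecMulVec_isSymm z)
    have hBlt : B.rank < A.rank := rank_drop A hs y hy1 hdsym
    have hBr : B.rank ≤ r := by omega
    have key : ∀ a b : ZMod 2, b ≠ a → a + b * b = 1 := by decide
    have hBd : B = 0 ∨ ∃ w, B w w = 1 := by
      rcases hy2 with h0 | ⟨w, hw⟩
      · left; exact h0
      · right
        refine ⟨w, ?_⟩
        have hBw : B w w = A w w + z w * z w := by simp [hB, vecMulVec_apply]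
        rw [hBw]
        exact key _ _ hw
    obtain ⟨L, hL1, hL2⟩ := ih B hBsym hBr hBd
    refine ⟨z :: L, ?_, ?_⟩
    · simp only [List.map_cons, List.sum_cons, hL1, hB]
      rw [add_comm A, ← add_assoc, mat_add_self, zero_add]
    · simp only [List.length_cons]
      omega

lemma dot_single (x : V → ZMod 2) (u : V) : x ⬝ᵥ Pi.single u 1 = x u := by
  simp [dotProduct, Pi.single_apply]

lemma alt_even (r : ℕ) : ∀ (A : Matrix V V (ZMod 2)), A.IsSymm → (∀ w, A w w = 0) →
    A.rank = r → Even r := by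
  induction r using Nat.strong_induction_on with
  | _ r ih =>
  intro A hs halt hr
  by_cases hA0 : A = 0
  · have : r = 0 := by rw [← hr, hA0, Matrix.rank_zero]
    simp [this]
  obtain ⟨u, v, huv⟩ : ∃ u v, A u v ≠ 0 := by
    by_contra hc; push_neg at hc
    exact hA0 (by ext i j; simpa using hc i j)
  have hAuv : A u v = 1 := z2_ne_zero huv
  have hAvu : A v u = 1 := by rw [hs.apply u v]; exact hAuv
  have hune : u ≠ v := by intro h; subst h; exact huv (halt u)
  set cu := A *ᵥ Pi.single u 1 with hcu
  set cv := A *ᵥ Pi.single v 1 with hcv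
  have hcuapp : ∀ i, cu i = A i u := by intro i; rw [hcu]; simp [mulVec_single]
  have hcvapp : ∀ i, cv i = A i v := by intro i; rw [hcv]; simp [mulVec_single]
  set M1 := vecMulVec cu cv with hM1
  set M2 := vecMulVec cv cu with hM2
  set B := A + M1 + M2 with hB
  have hBapp : ∀ i j, B i j = A i j + cu i * cv j + cv i * cu j := by
    intro i j; rw [hB]; simp [hM1, hM2, vecMulVec_apply]
  have hBsym : B.IsSymm := by
    ext i j
    rw [Matrix.transpose_apply, hBapp, hBapp, hs.apply i j]
    ring
  have hBalt : ∀ w, B w w = 0 := by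
    intro w
    rw [hBapp, halt w]
    have : ∀ a b : ZMod 2, (0 : ZMod 2) + a * b + b * a = 0 := by decide
    exact this _ _
  -- mulVec of B
  have hBmul : ∀ t, B *ᵥ t = A *ᵥ t + (cv ⬝ᵥ t) • cu + (cu ⬝ᵥ t) • cv := by
    intro t
    rw [hB, add_mulVec, add_mulVec, hM1, hM2, vecMulVec_mulVec, vecMulVec_mulVec]
  -- kernel containments
  set K := LinearMap.ker A.mulVecLin with hK
  have hKB : ∀ t, A *ᵥ t = 0 → B *ᵥ t = 0 := by
    intro t ht
    rw [hBmul, ht]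
    have h1 : cv ⬝ᵥ t = 0 := by rw [hcv, dot_symm A hs, ht, dotProduct_zero]
    have h2 : cu ⬝ᵥ t = 0 := by rw [hcu, dot_symm A hs, ht, dotProduct_zero]
    rw [h1, h2, zero_smul, zero_smul, add_zero, add_zero]
  have heu : B *ᵥ Pi.single u 1 = 0 := by
    rw [hBmul]
    have h1 : cv ⬝ᵥ Pi.single u 1 = 1 := by rw [dot_single, hcvapp]; exact hAuv
    have h2 : cu ⬝ᵥ Pi.single u 1 = 0 := by rw [dot_single, hcuapp]; exact halt u
    rw [h1, h2, one_smul, zero_smul, add_zero, ← hcu]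
    funext i; exact z2_add_self _
  have hev : B *ᵥ Pi.single v 1 = 0 := by
    rw [hBmul]
    have h1 : cv ⬝ᵥ Pi.single v 1 = 0 := by rw [dot_single, hcvapp]; exact halt v
    have h2 : cu ⬝ᵥ Pi.single v 1 = 1 := by rw [dot_single, hcuapp]; exact hAvu
    rw [h1, h2, one_smul, zero_smul, add_zero, ← hcv]
    funext i; exact z2_add_self _
  -- strict chain K < K1 < K2 ≤ ker B
  set K1 := K ⊔ Submodule.span (ZMod 2) {Pi.single u (1 : ZMod 2)} with hK1
  set K2 := K1 ⊔ Submodule.span (ZMod 2) {Pi.single v (1 : ZMod 2)} with hK2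
  have hKlt1 : K < K1 := by
    rw [hK1]
    refine lt_of_le_of_ne le_sup_left ?_
    intro hcon
    have hmem : Pi.single u (1 : ZMod 2) ∈ K := by
      rw [hcon]
      exact Submodule.mem_sup_right (Submodule.mem_span_singleton_self _)
    rw [hK, LinearMap.mem_ker, mulVecLin_apply] at hmem
    have := congrFun hmem v
    rw [← hcu, hcuapp v] at this
    rw [hAvu] at this
    exact one_ne_zero this
  have hK1lt2 : K1 < K2 := by
    rw [hK2]
    refine lt_of_le_of_ne le_sup_left ?_
    intro hcon
    have hmem : Pi.single v (1 : ZMod 2) ∈ K1 := by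
      rw [hcon]
      exact Submodule.mem_sup_right (Submodule.mem_span_singleton_self _)
    rw [hK1, Submodule.mem_sup] at hmem
    obtain ⟨k, hk, z, hz, hkz⟩ := hmem
    obtain ⟨c, rfl⟩ := Submodule.mem_span_singleton.mp hz
    rw [hK, LinearMap.mem_ker, mulVecLin_apply] at hk
    have : A *ᵥ Pi.single v 1 = A *ᵥ k + c • (A *ᵥ Pi.single u 1) := by
      rw [← hkz, mulVec_add, mulVec_smul]
    rw [hk, zero_add, ← hcu, ← hcv] at this
    have h1 := congrFun this u
    rw [hcvapp u, Pi.smul_apply, hcuapp u, halt u] at h1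
    rw [hAuv] at h1
    simp at h1
  have hK2B : K2 ≤ LinearMap.ker B.mulVecLin := by
    rw [hK2, hK1]
    refine sup_le (sup_le ?_ ?_) ?_
    · intro t ht
      rw [hK, LinearMap.mem_ker, mulVecLin_apply] at ht
      rw [LinearMap.mem_ker, mulVecLin_apply]
      exact hKB t ht
    · rw [Submodule.span_le, Set.singleton_subset_iff]
      rw [SetLike.mem_coe, LinearMap.mem_ker, mulVecLin_apply]
      exact heu
    · rw [Submodule.span_le, Set.singleton_subset_iff]
      rw [SetLike.mem_coe, LinearMap.mem_ker, mulVecLin_apply]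
      exact hev
  have hfin : finrank (ZMod 2) K + 2 ≤ finrank (ZMod 2) (LinearMap.ker B.mulVecLin) := by
    have f1 := Submodule.finrank_lt_finrank_of_lt hKlt1
    have f2 := Submodule.finrank_lt_finrank_of_lt hK1lt2
    have f3 := Submodule.finrank_mono hK2B
    omega
  -- rank A ≤ rank B + 2
  have hAB : A = B + M1 + M2 := by
    have habel : B + M1 + M2 = A + (M1 + M1) + (M2 + M2) := by rw [hB]; abel
    rw [habel, mat_add_self, mat_add_self, add_zero, add_zero]
  have hrle : A.rank ≤ B.rank + 2 := by
    calc A.rank = (B + M1 + M2).rank := by rw [← hAB]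
    _ ≤ (B + M1).rank + M2.rank := rank_add_le _ _
    _ ≤ B.rank + M1.rank + M2.rank := by have := rank_add_le B M1; omega
    _ ≤ B.rank + 2 := by
        have h1 := rank_vecMulVec_le cu cv
        have h2 := rank_vecMulVec_le cv cu
        rw [hM1, hM2]; omega
  have hkA := rank_add_ker A
  have hkB := rank_add_ker B
  have hBrank : B.rank + 2 = A.rank := by rw [hK] at hfin; omega
  have hBlt : B.rank < r := by omega
  have hEvenB := ih B.rank hBlt B hBsym hBalt rfl
  rw [Nat.even_iff] at hEvenB ⊢
  omega

/-- The symmetric rank-one matrix attached to a vertex subset. -/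
def matOf (C : Finset V) : Matrix V V (ZMod 2) :=
  vecMulVec (fun v => if v ∈ C then 1 else 0) (fun v => if v ∈ C then 1 else 0)

lemma card_filter_cast (𝒞 : Multiset (Finset V)) (u v : V) :
    ((Multiset.card (𝒞.filter fun C => u ∈ C ∧ v ∈ C)) : ZMod 2)
      = (𝒞.map matOf).sum u v := by
  induction 𝒞 using Multiset.induction_on with
  | empty => simp
  | cons C s ihs =>
    rw [Multiset.filter_cons, Multiset.map_cons, Multiset.sum_cons]
    have hentry : (matOf C + (Multiset.map matOf s).sum) u v
        = matOf C u v + (Multiset.map matOf s).sum u v := rfl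
    rw [hentry, Multiset.card_add, Nat.cast_add, ihs]
    congr 1
    by_cases h : u ∈ C ∧ v ∈ C
    · simp [h, matOf, vecMulVec_apply, h.1, h.2]
    · rcases not_and_or.mp h with h1 | h1 <;> simp [h, matOf, vecMulVec_apply, h1]

lemma matOf_sum_isSymm (𝒞 : Multiset (Finset V)) : ((𝒞.map matOf).sum).IsSymm := by
  induction 𝒞 using Multiset.induction_on with
  | empty => simp [Matrix.isSymm_zero]
  | cons C s ihs =>
    rw [Multiset.map_cons, Multiset.sum_cons]
    exact (vecMulVec_isSymm _).add ihs

lemma matOf_sum_rank_le (𝒞 : Multiset (Finset V)) :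
    ((𝒞.map matOf).sum).rank ≤ Multiset.card 𝒞 := by
  induction 𝒞 using Multiset.induction_on with
  | empty => simp [Matrix.rank_zero]
  | cons C s ihs =>
    rw [Multiset.map_cons, Multiset.sum_cons, Multiset.card_cons]
    have h1 := rank_add_le (matOf C) (Multiset.map matOf s).sum
    have h2 := rank_vecMulVec_le (fun v => if v ∈ C then (1 : ZMod 2) else 0)
      (fun v => if v ∈ C then (1 : ZMod 2) else 0)
    have h3 : (matOf C).rank ≤ 1 := h2
    omega

lemma mr_le_c2 (G : SimpleGraph V)
    (hne : {k | ∃ 𝒞 : Multiset (Finset V), IsSCS G 𝒞 ∧ Multiset.card 𝒞 = k}.Nonempty) :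
    mrF2 G ≤ c2 G := by
  obtain ⟨𝒞, hscs, hcard⟩ := Nat.sInf_mem hne
  set A := (𝒞.map matOf).sum with hA
  have hfits : FitsF2 G A := by
    refine ⟨matOf_sum_isSymm 𝒞, ?_⟩
    intro u v huv
    rw [hA, ← card_filter_cast, ← odd_iff_cast]
    exact (hscs u v huv).symm
  have h1 : mrF2 G ≤ A.rank := Nat.sInf_le ⟨A, hfits, rfl⟩
  calc mrF2 G ≤ A.rank := h1
  _ ≤ Multiset.card 𝒞 := matOf_sum_rank_le 𝒞
  _ = c2 G := hcard

/-- From a list of vectors summing (as rank-one matrices) to a fitting matrix, we get a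
subgraph complementation system of the same size. -/
lemma length_mem_c2_set (G : SimpleGraph V) (A : Matrix V V (ZMod 2)) (hfit : FitsF2 G A)
    (L : List (V → ZMod 2)) (hL : (L.map fun x => vecMulVec x x).sum = A) :
    L.length ∈ {k | ∃ 𝒞 : Multiset (Finset V), IsSCS G 𝒞 ∧ Multiset.card 𝒞 = k} := by
  refine ⟨(↑(L.map fun x => Finset.univ.filter fun v => x v = 1) : Multiset (Finset V)), ?_, ?_⟩
  · intro u v huv
    have hind : ∀ x : V → ZMod 2,
        (fun w => if w ∈ Finset.univ.filter (fun v => x v = 1) then (1 : ZMod 2) else 0) = x := by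
      intro x; funext w
      simp only [Finset.mem_filter, Finset.mem_univ, true_and]
      by_cases h : x w = 1
      · simp [h]
      · simp [h, z2_ne_one h]
    have hmap : (↑(L.map fun x => Finset.univ.filter fun v => x v = 1) :
        Multiset (Finset V)).map matOf = ↑(L.map fun x => vecMulVec x x) := by
      rw [Multiset.map_coe, List.map_map]
      have hfun : (matOf ∘ fun x : V → ZMod 2 => Finset.univ.filter fun v => x v = 1)
          = fun x : V → ZMod 2 => vecMulVec x x := by
        funext x
        show matOf _ = _
        rw [matOf, hind x]
      rw [hfun]
    rw [odd_iff_cast, card_filter_cast, hmap, Multiset.sum_coe, hL]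
    exact (hfit.2 u v huv).symm
  · simp

lemma exists_fits (G : SimpleGraph V) : ∃ A : Matrix V V (ZMod 2), FitsF2 G A := by
  classical
  refine ⟨Matrix.of fun u v => if G.Adj u v then 1 else 0, ?_, ?_⟩
  · ext i j
    simp only [Matrix.transpose_apply, Matrix.of_apply]
    rw [SimpleGraph.adj_comm]
  · intro u v huv
    by_cases h : G.Adj u v <;> simp [h]

end SCS

open SCS

theorem stmt8 {V : Type*} [Fintype V] [DecidableEq V] (G : SimpleGraph V) :
    c2 G = mrF2 G ∨ (c2 G = mrF2 G + 1 ∧ Even (mrF2 G)) := by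
  classical
  obtain ⟨A0, hA0⟩ := exists_fits G
  have hmrne : {k | ∃ A : Matrix V V (ZMod 2), FitsF2 G A ∧ A.rank = k}.Nonempty :=
    ⟨A0.rank, A0, hA0, rfl⟩
  obtain ⟨A, hfit, hrank⟩ : ∃ A : Matrix V V (ZMod 2), FitsF2 G A ∧ A.rank = mrF2 G :=
    Nat.sInf_mem hmrne
  have hAsymm := hfit.1
  by_cases hdiag : ∃ u, A u u = 1
  · obtain ⟨L, hL1, hL2⟩ := decomp A.rank A hAsymm le_rfl (Or.inr hdiag)
    have hmem := length_mem_c2_set G A hfit L hL1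
    have hc2le : c2 G ≤ mrF2 G := le_trans (Nat.sInf_le hmem) (hrank ▸ hL2)
    have hge := mr_le_c2 G ⟨L.length, hmem⟩
    left; omega
  · push_neg at hdiag
    have halt : ∀ w, A w w = 0 := fun w => z2_ne_one (hdiag w)
    have heven : Even (mrF2 G) := hrank ▸ alt_even A.rank A hAsymm halt rfl
    by_cases hA0' : A = 0
    · have hmem := length_mem_c2_set G A hfit [] (by simp [hA0'])
      have hc2le : c2 G ≤ 0 := Nat.sInf_le hmem
      have hge := mr_le_c2 G ⟨([] : List (V → ZMod 2)).length, hmem⟩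
      left; omega
    · obtain ⟨u, v, huv⟩ : ∃ u v, A u v ≠ 0 := by
        by_contra hc; push_neg at hc
        exact hA0' (by ext i j; simpa using hc i j)
      have hAuv : A u v = 1 := z2_ne_zero huv
      set t : V → ZMod 2 := Pi.single u 1 + Pi.single v 1 with ht
      set z := A *ᵥ t with hz
      set B := A + vecMulVec z z with hB
      have hBsym : B.IsSymm := hAsymm.add (vecMulVec_isSymm z)
      have hBrank : B.rank ≤ A.rank := rank_add_vecMulVec_le A t
      have hzu : z u = 1 := by
        rw [hz, ht, mulVec_add]
        have h1 : (A *ᵥ Pi.single u (1 : ZMod 2)) u = A u u := by simp [mulVec_single]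
        have h2 : (A *ᵥ Pi.single v (1 : ZMod 2)) u = A u v := by simp [mulVec_single]
        rw [Pi.add_apply, h1, h2, halt u, zero_add, hAuv]
      have hBuu : B u u = 1 := by
        have hb : B u u = A u u + z u * z u := by simp [hB, vecMulVec_apply]
        rw [hb, halt u, hzu, zero_add, mul_one]
      obtain ⟨L, hL1, hL2⟩ := decomp B.rank B hBsym le_rfl (Or.inr ⟨u, hBuu⟩)
      have hsum : ((z :: L).map fun x => vecMulVec x x).sum = A := by
        simp only [List.map_cons, List.sum_cons, hL1, hB]
        rw [add_comm A, ← add_assoc, mat_add_self, zero_add]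
      have hmem := length_mem_c2_set G A hfit (z :: L) hsum
      have hc2le : c2 G ≤ L.length + 1 := by
        have h := Nat.sInf_le hmem
        simpa [c2] using h
      have hge := mr_le_c2 G ⟨(z :: L).length, hmem⟩
      have hlen : L.length + 1 ≤ mrF2 G + 1 := by
        have h5 := hL2
        have h6 := hBrank
        have h7 := hrank
        omega
      rcases Nat.lt_or_ge (c2 G) (mrF2 G + 1) with h | h
      · left; omega
      · right; exact ⟨by omega, heven⟩
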